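/- arXiv:1109.1776 — 3 statements merged into one kernel-verified Lean document; each statement's English description precedes it below -/
import Mathlib

section
/- Let p ∈ (1,∞), n ∈ ℕ, and let T_n : ℝ^ℕ → ℝ^ℕ be the stretch map defined by (T_n x)(kn) = x(k) for all k and by linear interpolation at intermediate indices, i.e., (T_n x)(kn + r) = x(k) + (r/n)(x(k+1) - x(k)) for 0 ≤ r < n. Then ‖T_n x‖_{J_p} = ‖x‖_{J_p} for every x with ‖x‖_{J_p} < ∞, where ‖x‖_{J_p} = sup over finite A ⊆ ℕ of ν_p(x, A). -/
open List Set

/-- The `p`-th power of the seminorm `ν_p(x, A)`: the sum of `|x(n_j) - x(n_{j+1})|^p`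
over consecutive elements `n_j < n_{j+1}` of the increasing enumeration of `A`. -/
noncomputable def nuPow (p : ℝ) (x : ℕ → ℝ) (A : Finset ℕ) : ℝ :=
  ((A.sort (· ≤ ·)).zipWith (fun a b => |x a - x b| ^ p) (A.sort (· ≤ ·)).tail).sum

/-- The seminorm `ν_p(x, A) = (Σ_j |x(n_j) - x(n_{j+1})|^p)^{1/p}`. -/
noncomputable def nuP (p : ℝ) (x : ℕ → ℝ) (A : Finset ℕ) : ℝ := (nuPow p x A) ^ (1 / p)

/-- The stretch map `T_n`: `(T_n x)(kn) = x(k)`, with linear interpolation in between,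
i.e. `(T_n x)(kn + r) = x(k) + (r/n)(x(k+1) - x(k))` for `0 ≤ r < n`. -/
noncomputable def stretch (n : ℕ) (x : ℕ → ℝ) : ℕ → ℝ :=
  fun i => x (i / n) + ((i % n : ℕ) : ℝ) / (n : ℝ) * (x (i / n + 1) - x (i / n))

noncomputable def vS (p : ℝ) : List ℝ → ℝ
  | a :: b :: l => |a - b| ^ p + vS p (b :: l)
  | _ => 0

noncomputable def pairT (p : ℝ) : Option ℝ → Option ℝ → ℝ
  | some a, some b => |a - b| ^ p
  | _, _ => 0

lemma vS_nonneg (p : ℝ) : ∀ l : List ℝ, 0 ≤ vS p l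
  | [] => le_refl _
  | [_] => le_refl _
  | a :: b :: l => by
      rw [vS]
      have := vS_nonneg p (b :: l)
      positivity

lemma vS_cons (p : ℝ) (v : ℝ) (L : List ℝ) :
    vS p (v :: L) = pairT p (some v) L.head? + vS p L := by
  cases L with
  | nil => simp [vS, pairT]
  | cons b t => simp [vS, pairT]

lemma vS_append (p : ℝ) : ∀ (L₁ L₂ : List ℝ),
    vS p (L₁ ++ L₂) = vS p L₁ + pairT p L₁.getLast? L₂.head? + vS p L₂
  | [], L₂ => by simp [vS, pairT]
  | [a], L₂ => by
      cases L₂ with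
      | nil => simp [vS, pairT]
      | cons b t => simp [vS, pairT, vS_cons]
  | a :: c :: L₁, L₂ => by
      have ih := vS_append p (c :: L₁) L₂
      simp only [cons_append, vS, List.getLast?_cons_cons]
      rw [show (c :: (L₁ ++ L₂) : List ℝ) = (c :: L₁) ++ L₂ from rfl, ih]
      ring

lemma conv_abs_rpow {p : ℝ} (hp : 1 ≤ p) (c : ℝ) :
    ConvexOn ℝ Set.univ fun t : ℝ => |c - t| ^ p := by
  refine ⟨convex_univ, fun a _ b _ α β hα hβ hab => ?_⟩
  simp only [smul_eq_mul]
  have h1 : |c - (α * a + β * b)| ≤ α * |c - a| + β * |c - b| := by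
    have he : c - (α * a + β * b) = α * (c - a) + β * (c - b) := by linear_combination (-c) * hab
    calc |c - (α * a + β * b)| = |α * (c - a) + β * (c - b)| := by rw [he]
    _ ≤ |α * (c - a)| + |β * (c - b)| := abs_add_le _ _
    _ = α * |c - a| + β * |c - b| := by rw [abs_mul, abs_mul, abs_of_nonneg hα, abs_of_nonneg hβ]
  have h2 := (convexOn_rpow hp).2 (Set.mem_Ici.2 (abs_nonneg (c - a)))
    (Set.mem_Ici.2 (abs_nonneg (c - b))) hα hβ hab
  simp only [smul_eq_mul] at h2
  calc |c - (α * a + β * b)| ^ p ≤ (α * |c - a| + β * |c - b|) ^ p :=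
        Real.rpow_le_rpow (abs_nonneg _) h1 (by linarith)
  _ ≤ α * |c - a| ^ p + β * |c - b| ^ p := h2

lemma conv_pairT_left {p : ℝ} (hp : 1 ≤ p) (o : Option ℝ) :
    ConvexOn ℝ Set.univ fun t : ℝ => pairT p o (some t) := by
  cases o with
  | none => exact convexOn_const 0 convex_univ
  | some c => exact conv_abs_rpow hp c

lemma conv_pairT_right {p : ℝ} (hp : 1 ≤ p) (o : Option ℝ) :
    ConvexOn ℝ Set.univ fun t : ℝ => pairT p (some t) o := by
  cases o with
  | none => exact convexOn_const 0 convex_univ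
  | some c =>
    have := conv_abs_rpow hp c
    simpa only [pairT, abs_sub_comm] using this

lemma vS_append_cons (p : ℝ) (L₁ L₂ : List ℝ) (v : ℝ) :
    vS p (L₁ ++ v :: L₂) =
      vS p L₁ + pairT p L₁.getLast? (some v) + pairT p (some v) L₂.head? + vS p L₂ := by
  rw [vS_append, vS_cons, List.head?_cons]
  ring

lemma vS_core {p : ℝ} (hp : 1 ≤ p) (L₁ L₂ : List ℝ) {v u w : ℝ} (hv : v ∈ Set.uIcc u w) :
    vS p (L₁ ++ v :: L₂) ≤ vS p (L₁ ++ u :: L₂) ∨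
      vS p (L₁ ++ v :: L₂) ≤ vS p (L₁ ++ w :: L₂) := by
  set f : ℝ → ℝ := fun t =>
    vS p L₁ + pairT p L₁.getLast? (some t) + pairT p (some t) L₂.head? + vS p L₂ with hf
  have hconv : ConvexOn ℝ Set.univ f :=
    (((convexOn_const _ convex_univ).add (conv_pairT_left hp L₁.getLast?)).add
      (conv_pairT_right hp L₂.head?)).add (convexOn_const _ convex_univ)
  have hseg : v ∈ segment ℝ u w := by rwa [segment_eq_uIcc]
  have hle := hconv.le_on_segment (Set.mem_univ u) (Set.mem_univ w) hseg
  rw [le_max_iff] at hle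
  simpa only [hf, ← vS_append_cons] using hle

lemma vS_dup (p : ℝ) (hp : p ≠ 0) {L₁ : List ℝ} (L₂ : List ℝ) {c : ℝ}
    (h : L₁.getLast? = some c) : vS p (L₁ ++ c :: L₂) = vS p (L₁ ++ L₂) := by
  rw [vS_append_cons, vS_append, h]
  have : pairT p (some c) (some c) = 0 := by
    simp [pairT, Real.zero_rpow hp]
  rw [this]
  ring

lemma stretch_mul {n : ℕ} (hn : 0 < n) (x : ℕ → ℝ) (k : ℕ) :
    stretch n x (k * n) = x k := by
  unfold stretch
  rw [Nat.mul_div_cancel k hn, Nat.mul_mod_left]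
  simp

lemma stretch_mem {n : ℕ} (hn : 0 < n) (x : ℕ → ℝ) {a i : ℕ} (hai : a ≤ i)
    (hd : a / n = i / n) :
    stretch n x i ∈ Set.uIcc (stretch n x a) (x (i / n + 1)) := by
  have hmod : a % n ≤ i % n := by
    have h1 := Nat.div_add_mod a n
    have h2 := Nat.div_add_mod i n
    rw [hd] at h1
    omega
  have hnR : (0:ℝ) < n := by exact_mod_cast hn
  have hs0 : (0:ℝ) ≤ (a % n : ℕ) := by positivity
  have hst : ((a % n : ℕ) : ℝ) ≤ ((i % n : ℕ) : ℝ) := by exact_mod_cast hmod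
  have ht1 : ((i % n : ℕ) : ℝ) ≤ (n : ℝ) := by
    exact_mod_cast le_of_lt (Nat.mod_lt i hn)
  unfold stretch
  rw [hd]
  set s : ℝ := ((a % n : ℕ) : ℝ) / n with hsdef
  set t : ℝ := ((i % n : ℕ) : ℝ) / n with htdef
  have hs0' : 0 ≤ s := by positivity
  have hst' : s ≤ t := by rw [hsdef, htdef]; gcongr
  have ht1' : t ≤ 1 := by rw [htdef, div_le_one hnR]; exact ht1
  rcases le_total (x (i / n)) (x (i / n + 1)) with h | h
  · rw [Set.mem_uIcc]
    left
    constructor <;> nlinarith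
  · rw [Set.mem_uIcc]
    right
    constructor <;> nlinarith

lemma exists_last_not (P : ℕ → Prop) [DecidablePred P] :
    ∀ (l : List ℕ), (¬ ∀ i ∈ l, P i) →
    ∃ l₁ i l₂, l = l₁ ++ i :: l₂ ∧ ¬ P i ∧ ∀ j ∈ l₂, P j
  | [], h => absurd (by simp) h
  | a :: t, h => by
    by_cases ht : ∀ i ∈ t, P i
    · refine ⟨[], a, t, rfl, fun hPa => h ?_, ht⟩
      intro i hi
      rcases List.mem_cons.1 hi with rfl | hit
      · exact hPa
      · exact ht i hit
    · obtain ⟨l₁, i, l₂, he, hi, hl₂⟩ := exists_last_not P t ht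
      exact ⟨a :: l₁, i, l₂, by rw [he]; rfl, hi, hl₂⟩

lemma main_ind {p : ℝ} (hp : 1 ≤ p) (hp0 : p ≠ 0) {n : ℕ} (hn : 0 < n) (x : ℕ → ℝ) :
    ∀ (N : ℕ) (l : List ℕ), l.countP (fun i => decide (¬ n ∣ i)) = N →
      l.Chain' (· ≤ ·) →
      ∃ m : List ℕ, m.Chain' (· ≤ ·) ∧ (∀ j ∈ m, n ∣ j) ∧
        vS p (l.map (stretch n x)) ≤ vS p (m.map (stretch n x)) := by
  intro N
  induction N using Nat.strong_induction_on with
  | _ N IH =>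
  intro l hcnt hchain
  by_cases hall : ∀ i ∈ l, n ∣ i
  · exact ⟨l, hchain, hall, le_refl _⟩
  obtain ⟨l₁, i, l₂, rfl, hi, hl₂⟩ := exists_last_not (fun i => n ∣ i) l hall
  set P : ℕ → Bool := fun j => decide (¬ n ∣ j) with hP
  set y := stretch n x with hy
  set k := i / n with hk
  have himod : i % n ≠ 0 := fun h => hi (Nat.dvd_iff_mod_eq_zero.mpr h)
  have h1 : n * k + i % n = i := Nat.div_add_mod i n
  have hkni : n * k < i := by
    rw [← h1]; exact Nat.lt_add_of_pos_right (Nat.pos_of_ne_zero himod)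
  have hik1 : i < (k + 1) * n :=
    calc i = n * k + i % n := h1.symm
    _ < n * k + n := Nat.add_lt_add_left (Nat.mod_lt i hn) _
    _ = (k + 1) * n := by ring
  obtain ⟨hc1, hc2, hcross⟩ := List.isChain_append.1 hchain
  have hcross' : ∀ a ∈ l₁.getLast?, a ≤ i := fun a ha => hcross a ha i rfl
  obtain ⟨hib, hcl₂⟩ := List.isChain_cons.1 hc2
  have hbmul : ∀ b ∈ l₂.head?, (k + 1) * n ≤ b := by
    intro b hb
    obtain ⟨m', rfl⟩ := hl₂ b (List.mem_of_mem_head? hb)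
    have hib' : i ≤ n * m' := hib _ hb
    have hkm : k < m' := by
      by_contra hh
      push_neg at hh
      exact absurd (lt_of_le_of_lt (le_trans hib' (Nat.mul_le_mul_left n hh)) hkni)
        (lt_irrefl i)
    calc (k + 1) * n = n * (k + 1) := mul_comm _ _
    _ ≤ n * m' := Nat.mul_le_mul_left n hkm
  have hcnt' : l₁.countP P + l₂.countP P + 1 = N := by
    rw [← hcnt, List.countP_append, List.countP_cons]
    have : P i = true := by simp [hP, hi]
    rw [this, if_pos rfl]
    omega
  have hclt : ∀ c : ℕ, n ∣ c → (l₁ ++ c :: l₂).countP P < N := by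
    intro c hc
    rw [List.countP_append, List.countP_cons]
    have : P c = false := by simp [hP, hc]
    rw [this, if_neg (by simp)]
    omega
  have hdlt : (l₁ ++ l₂).countP P < N := by
    rw [List.countP_append]; omega
  have hmapeq : ∀ c : ℕ, (l₁.map y) ++ (y c) :: (l₂.map y) = (l₁ ++ c :: l₂).map y := by
    intro c; simp
  have hfin : ∀ c : ℕ, n ∣ c → (∀ a' ∈ l₁.getLast?, a' ≤ c) → (∀ b ∈ l₂.head?, c ≤ b) →
      vS p ((l₁ ++ i :: l₂).map y) ≤ vS p (((l₁.map y) ++ (y c) :: (l₂.map y))) →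
      ∃ m : List ℕ, m.Chain' (· ≤ ·) ∧ (∀ j ∈ m, n ∣ j) ∧
        vS p ((l₁ ++ i :: l₂).map y) ≤ vS p (m.map y) := by
    intro c hcdvd hlast hhead hle
    have hch : (l₁ ++ c :: l₂).Chain' (· ≤ ·) := by
      refine List.isChain_append.2 ⟨hc1, List.isChain_cons.2 ⟨hhead, hcl₂⟩, ?_⟩
      intro a' ha' b hb
      rw [List.head?_cons, Option.mem_def, Option.some.injEq] at hb
      subst hb
      exact hlast a' ha'
    obtain ⟨m, hm1, hm2, hm3⟩ := IH _ (hclt c hcdvd) _ rfl hch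
    exact ⟨m, hm1, hm2, le_trans (by rwa [hmapeq] at hle) hm3⟩
  by_cases hA : ∃ a, l₁.getLast? = some a ∧ k * n ≤ a
  · -- Case A : last element of l₁ lies in the same block as i
    obtain ⟨a, hLa, hka⟩ := hA
    have hai : a ≤ i := hcross' a hLa
    have hdiv : a / n = i / n :=
      (Nat.div_eq_of_lt_le hka (lt_of_le_of_lt hai hik1)).trans hk
    have hmem : y i ∈ Set.uIcc (y a) (y ((k + 1) * n)) := by
      rw [hy, stretch_mul hn x (k + 1)]
      exact stretch_mem hn x hai hdiv
    rcases vS_core hp (l₁.map y) (l₂.map y) hmem with h | h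
    · -- snap to a, i.e. delete i
      have hdup : vS p ((l₁.map y) ++ (y a) :: (l₂.map y)) = vS p ((l₁ ++ l₂).map y) := by
        rw [vS_dup p hp0 _ (by rw [List.getLast?_map, hLa]; rfl), ← List.map_append]
      have hch : (l₁ ++ l₂).Chain' (· ≤ ·) :=
        List.isChain_append.2 ⟨hc1, hcl₂,
          fun a' ha' b hb => le_trans (hcross' a' ha') (hib b hb)⟩
      obtain ⟨m, hm1, hm2, hm3⟩ := IH _ hdlt _ rfl hch
      refine ⟨m, hm1, hm2, ?_⟩
      calc vS p ((l₁ ++ i :: l₂).map y)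
          = vS p ((l₁.map y) ++ (y i) :: (l₂.map y)) := by rw [hmapeq]
        _ ≤ vS p ((l₁.map y) ++ (y a) :: (l₂.map y)) := h
        _ = vS p ((l₁ ++ l₂).map y) := hdup
        _ ≤ vS p (m.map y) := hm3
    · -- snap to (k+1)*n
      refine hfin ((k + 1) * n) (dvd_mul_left n (k + 1))
        (fun a' ha' => le_trans (hcross' a' ha') (le_of_lt hik1)) hbmul ?_
      rw [← hmapeq i]
      exact h
  · -- Case B : l₁ is empty or its last element is in an earlier block
    push_neg at hA
    have hlastlt : ∀ a' ∈ l₁.getLast?, a' < k * n := fun a' ha' => hA a' ha'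
    have hmem : y i ∈ Set.uIcc (y (k * n)) (y ((k + 1) * n)) := by
      rw [hy, stretch_mul hn x (k + 1)]
      refine stretch_mem hn x ?_ ?_
      · rw [mul_comm]; exact le_of_lt hkni
      · rw [Nat.mul_div_cancel _ hn, hk]
    rcases vS_core hp (l₁.map y) (l₂.map y) hmem with h | h
    · refine hfin (k * n) (dvd_mul_left n k)
        (fun a' ha' => le_of_lt (hlastlt a' ha'))
        (fun b hb => le_trans (by rw [mul_comm]; exact le_of_lt hkni) (hib b hb)) ?_
      rw [← hmapeq i]
      exact h
    · refine hfin ((k + 1) * n) (dvd_mul_left n (k + 1))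
        (fun a' ha' => le_of_lt (lt_of_lt_of_le (hlastlt a' ha')
          (Nat.mul_le_mul_right n (Nat.le_succ k)))) hbmul ?_
      rw [← hmapeq i]
      exact h

lemma zip_eq_vS (p : ℝ) (x : ℕ → ℝ) :
    ∀ l : List ℕ, (l.zipWith (fun a b => |x a - x b| ^ p) l.tail).sum = vS p (l.map x)
  | [] => rfl
  | [_] => rfl
  | a :: b :: t => by
      have ih := zip_eq_vS p x (b :: t)
      simp only [List.tail_cons, List.zipWith_cons_cons, List.sum_cons, List.map_cons, vS] at *
      rw [ih]

lemma nuPow_eq_vS (p : ℝ) (x : ℕ → ℝ) (A : Finset ℕ) :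
    nuPow p x A = vS p ((A.sort (· ≤ ·)).map x) := zip_eq_vS p x _

lemma exists_adj_dup {m : List ℕ} (hle : m.Chain' (· ≤ ·)) (hlt : ¬ m.Chain' (· < ·)) :
    ∃ l₁ c l₂, m = l₁ ++ c :: c :: l₂ := by
  induction m with
  | nil => exact absurd List.isChain_nil hlt
  | cons a t ih =>
    cases t with
    | nil => exact absurd (List.isChain_singleton a) hlt
    | cons b t' =>
      obtain ⟨hab, ht⟩ := List.isChain_cons_cons.1 hle
      rcases eq_or_lt_of_le hab with rfl | hab'
      · exact ⟨[], a, t', rfl⟩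
      · have : ¬ (b :: t').Chain' (· < ·) := fun hc => hlt (List.isChain_cons_cons.2 ⟨hab', hc⟩)
        obtain ⟨l₁, c, l₂, he⟩ := ih ht this
        exact ⟨a :: l₁, c, l₂, by rw [he]; rfl⟩

lemma vS_le_nuPow {p : ℝ} (hp0 : p ≠ 0) (x : ℕ → ℝ) :
    ∀ (N : ℕ) (m : List ℕ), m.length = N → m.Chain' (· ≤ ·) →
      ∃ A : Finset ℕ, vS p (m.map x) ≤ nuPow p x A := by
  intro N
  induction N using Nat.strong_induction_on with
  | _ N IH =>
  intro m hlen hle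
  by_cases hlt : m.Chain' (· < ·)
  · refine ⟨m.toFinset, le_of_eq ?_⟩
    have hsorted : m.Pairwise (· < ·) := List.isChain_iff_pairwise.1 hlt
    have hnodup : m.Nodup := hsorted.imp (fun h => ne_of_lt h)
    have hs : Finset.sort m.toFinset (· ≤ ·) = m :=
      (List.toFinset_sort (· ≤ ·) hnodup).2 (hsorted.imp le_of_lt)
    rw [nuPow_eq_vS, hs]
  · obtain ⟨l₁, c, l₂, rfl⟩ := exists_adj_dup hle hlt
    have hkey : vS p ((l₁ ++ c :: c :: l₂).map x) = vS p ((l₁ ++ c :: l₂).map x) := by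
      have h1 : (l₁ ++ c :: c :: l₂).map x = ((l₁ ++ [c]).map x) ++ (x c) :: (l₂.map x) := by
        simp
      have h2 : (l₁ ++ c :: l₂).map x = ((l₁ ++ [c]).map x) ++ (l₂.map x) := by simp
      rw [h1, h2, vS_dup p hp0 _ (by simp)]
    have hch : (l₁ ++ c :: l₂).Chain' (· ≤ ·) := by
      have hsub : (l₁ ++ c :: l₂) <+ (l₁ ++ c :: c :: l₂) :=
        ((List.sublist_cons_self c l₂).cons₂ c).append_left l₁
      exact hle.sublist hsub
    obtain ⟨A, hA⟩ := IH (l₁ ++ c :: l₂).length (by subst hlen; simp) _ rfl hch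
    exact ⟨A, by rw [hkey]; exact hA⟩

lemma nuP_image {p : ℝ} {n : ℕ} (hn : 0 < n) (x : ℕ → ℝ) (A : Finset ℕ) :
    nuP p (stretch n x) (A.image (· * n)) = nuP p x A := by
  have hsortlt := (Finset.sortedLT_sort A).pairwise
  set l := Finset.sort A (· ≤ ·) with hl
  set l' := l.map (· * n) with hl'
  have hsorted' : l'.Pairwise (· < ·) :=
    List.Pairwise.map _ (fun a b h => (Nat.mul_lt_mul_right hn).2 h) hsortlt
  have hnodup' : l'.Nodup := hsorted'.imp (fun h => ne_of_lt h)
  have htf : l'.toFinset = A.image (· * n) := by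
    rw [hl']
    ext b
    simp [List.mem_map, hl]
  have hs : Finset.sort (A.image (· * n)) (· ≤ ·) = l' := by
    rw [← htf]
    exact (List.toFinset_sort (· ≤ ·) hnodup').2 (hsorted'.imp le_of_lt)
  have hmap : l'.map (stretch n x) = l.map x := by
    rw [hl', List.map_map]
    exact List.map_congr_left (fun a _ => stretch_mul hn x a)
  unfold nuP
  rw [nuPow_eq_vS, nuPow_eq_vS, hs, hmap]

/-- The stretch map `T_n` is an isometry for the James `p`-norm
`‖x‖_{J_p} = sup_A ν_p(x, A)` over finite `A ⊆ ℕ`. -/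
theorem stretch_isometry (p : ℝ) (hp : 1 < p) (n : ℕ) (hn : 0 < n) (x : ℕ → ℝ)
    (hx : BddAbove (Set.range fun A : Finset ℕ => nuP p x A)) :
    (⨆ A : Finset ℕ, nuP p (stretch n x) A) = ⨆ A : Finset ℕ, nuP p x A := by
  have hp1 : 1 ≤ p := le_of_lt hp
  have hp0 : p ≠ 0 := by positivity
  have key : ∀ B : Finset ℕ, ∃ A : Finset ℕ, nuPow p (stretch n x) B ≤ nuPow p x A := by
    intro B
    have hchain : (B.sort (· ≤ ·)).Chain' (· ≤ ·) :=
      List.isChain_iff_pairwise.2 (Finset.pairwise_sort _ _)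
    obtain ⟨m, hm1, hm2, hm3⟩ := main_ind hp1 hp0 hn x _ (B.sort (· ≤ ·)) rfl hchain
    have hmy : m.map (stretch n x) = (m.map (· / n)).map x := by
      rw [List.map_map]
      refine List.map_congr_left fun a ha => ?_
      obtain ⟨c', rfl⟩ := hm2 a ha
      have h1 : n * c' = c' * n := mul_comm _ _
      rw [h1, stretch_mul hn x c']
      simp [Nat.mul_div_cancel _ hn]
    have hchain' : (m.map (· / n)).Chain' (· ≤ ·) :=
      List.isChain_map_of_isChain _ (fun a b h => Nat.div_le_div_right h) hm1
    obtain ⟨A, hA⟩ := vS_le_nuPow hp0 x _ (m.map (· / n)) rfl hchain'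
    refine ⟨A, ?_⟩
    rw [nuPow_eq_vS]
    calc vS p ((B.sort (· ≤ ·)).map (stretch n x)) ≤ vS p (m.map (stretch n x)) := hm3
    _ = vS p ((m.map (· / n)).map x) := by rw [hmy]
    _ ≤ nuPow p x A := hA
  set c := ⨆ A : Finset ℕ, nuP p x A with hc
  have hyle : ∀ B : Finset ℕ, nuP p (stretch n x) B ≤ c := by
    intro B
    obtain ⟨A, hA⟩ := key B
    have h0 : 0 ≤ nuPow p (stretch n x) B := by rw [nuPow_eq_vS]; exact vS_nonneg p _
    have h1 : nuP p (stretch n x) B ≤ nuP p x A :=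
      Real.rpow_le_rpow h0 hA (by positivity)
    exact h1.trans (le_ciSup hx A)
  have hbdd : BddAbove (Set.range fun B : Finset ℕ => nuP p (stretch n x) B) :=
    ⟨c, by rintro _ ⟨B, rfl⟩; exact hyle B⟩
  apply _root_.le_antisymm
  · exact ciSup_le hyle
  · refine ciSup_le fun A => ?_
    rw [← nuP_image hn x A]
    exact le_ciSup hbdd (A.image (· * n))
end

section
/- Let p ∈ (1,∞), ℓ ∈ ℕ, and suppose C₁,…,C_ℓ and D₁,…,D_ℓ are finite subsets of ℕ with min C_j = min D_j = m_j and max C_j = max D_j = m'_j, where m'_j ≤ m_{j+1} for each j < ℓ. Suppose E₁,…,E_{ℓ-1} are finite subsets of ℕ with min E_j = m'_j and max E_j = m_{j+1}, and set E_ℓ = {m'_ℓ}. Then for every v : ℕ → ℝ, Σ_{j=1}^ℓ (ν_p(v, D_j)^p - ν_p(v, C_j)^p) = ν_p(v, ∪_j (D_j ∪ E_j))^p - ν_p(v, ∪_j (C_j ∪ E_j))^p. -/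
namespace NuAux

/-- pairwise-consecutive sum over a list -/
noncomputable def ps (f : ℕ → ℕ → ℝ) (l : List ℕ) : ℝ := (l.zipWith f l.tail).sum

lemma ps_cons_cons (f : ℕ → ℕ → ℝ) (a b : ℕ) (l : List ℕ) :
    ps f (a :: b :: l) = f a b + ps f (b :: l) := rfl

lemma ps_append (f : ℕ → ℕ → ℝ) :
    ∀ (L M : List ℕ) (hL : L ≠ []) (hM : M ≠ []), L.getLast hL = M.head hM →
    ps f (L ++ M.tail) = ps f L + ps f M := by
  intro L
  induction L with
  | nil => intro M h; exact absurd rfl h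
  | cons a L ih =>
    intro M _ hM hlast
    match L with
    | [] =>
      obtain ⟨m, t, rfl⟩ : ∃ m t, M = m :: t := ⟨M.head hM, M.tail, (List.cons_head_tail hM).symm⟩
      simp only [List.getLast_singleton, List.head_cons] at hlast
      subst hlast
      simp [ps]
    | b :: r =>
      have h1 : (a :: b :: r) ++ M.tail = a :: b :: (r ++ M.tail) := rfl
      rw [h1]
      have h2 : b :: (r ++ M.tail) = (b :: r) ++ M.tail := rfl
      rw [ps_cons_cons, h2, ih M (by simp) hM (by rw [← hlast]; exact (List.getLast_cons (by simp)).symm),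
        ps_cons_cons]
      ring

lemma sort_ne_nil {A : Finset ℕ} (hA : A.Nonempty) : A.sort (· ≤ ·) ≠ [] := by
  have : (A.sort (· ≤ ·)).length = A.card := Finset.length_sort _
  have hc : 0 < A.card := Finset.card_pos.mpr hA
  intro h
  rw [h] at this
  simp at this
  omega

lemma head_sort {A : Finset ℕ} (hA : A.Nonempty) :
    (A.sort (· ≤ ·)).head (sort_ne_nil hA) = A.min' hA := by
  have h0 : 0 < (A.sort (· ≤ ·)).length := List.length_pos_iff.mpr (sort_ne_nil hA)
  rw [← List.getElem_zero h0]
  exact Finset.sorted_zero_eq_min' (h := h0)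

lemma getLast_sort {A : Finset ℕ} (hA : A.Nonempty) :
    (A.sort (· ≤ ·)).getLast (sort_ne_nil hA) = A.max' hA := by
  rw [List.getLast_eq_getElem]
  exact Finset.sorted_last_eq_max'
    (h := by have := List.length_pos_iff.mpr (sort_ne_nil hA); omega)

lemma sort_union {A B : Finset ℕ} (hA : A.Nonempty) (hB : B.Nonempty)
    (h : A.max' hA = B.min' hB) :
    (A ∪ B).sort (· ≤ ·) = A.sort (· ≤ ·) ++ (B.sort (· ≤ ·)).tail := by
  set m := B.min' hB with hm
  have hmA : m ∈ A := h ▸ A.max'_mem hA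
  have hdisj : Disjoint A (B.erase m) := by
    rw [Finset.disjoint_left]
    intro a haA haB
    have h1 : a ≤ A.max' hA := Finset.le_max' A a haA
    have h2 : m ≤ a := Finset.min'_le B a (Finset.mem_of_mem_erase haB)
    have : a = m := le_antisymm (h ▸ h1) h2
    exact (Finset.ne_of_mem_erase haB) this
  have hunion : A ∪ B = A.disjUnion (B.erase m) hdisj := by
    rw [Finset.disjUnion_eq_union]
    ext a
    simp only [Finset.mem_union, Finset.mem_erase]
    constructor
    · rintro (ha | hb)
      · exact Or.inl ha
      · by_cases hab : a = m
        · exact Or.inl (hab ▸ hmA)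
        · exact Or.inr ⟨hab, hb⟩
    · rintro (ha | ⟨_, hb⟩)
      · exact Or.inl ha
      · exact Or.inr hb
  -- head structure of sort B
  have hBsort : B.sort (· ≤ ·) = m :: (B.sort (· ≤ ·)).tail := by
    conv_lhs => rw [← List.cons_head_tail (sort_ne_nil hB)]
    rw [head_sort hB]
  refine (fun hp h1 h2 => List.Perm.eq_of_pairwise' (r := (· ≤ ·)) h1 h2 hp) ?_ ?_ ?_
  · rw [← Multiset.coe_eq_coe]
    have e1 : ((A ∪ B).sort (· ≤ ·) : Multiset ℕ) = (A ∪ B).val := Finset.sort_eq _ _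
    have e2 : ((A.sort (· ≤ ·) ++ (B.sort (· ≤ ·)).tail : List ℕ) : Multiset ℕ)
        = A.val + ((B.sort (· ≤ ·)).tail : Multiset ℕ) := by
      show ((A.sort (· ≤ ·) : List ℕ) : Multiset ℕ) + (((B.sort (· ≤ ·)).tail : List ℕ) : Multiset ℕ)
          = A.val + (((B.sort (· ≤ ·)).tail : List ℕ) : Multiset ℕ)
      rw [Finset.sort_eq]
    have e3 : (((B.sort (· ≤ ·)).tail : List ℕ) : Multiset ℕ) = B.val.erase m := by
      have : (B.sort (· ≤ ·) : Multiset ℕ) = B.val := Finset.sort_eq _ _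
      rw [hBsort] at this
      have : (m ::ₘ ((B.sort (· ≤ ·)).tail : Multiset ℕ)) = B.val := this
      rw [← this, Multiset.erase_cons_head]
    rw [e1, e2, e3, hunion]
    rfl
  · exact Finset.pairwise_sort _ _
  · have hs1 : List.Pairwise (· ≤ ·) (A.sort (· ≤ ·)) := Finset.pairwise_sort _ _
    have hs2 : List.Pairwise (· ≤ ·) ((B.sort (· ≤ ·)).tail) :=
      List.Pairwise.sublist (List.tail_sublist _) (Finset.pairwise_sort _ _)
    rw [List.pairwise_append]
    refine ⟨hs1, hs2, ?_⟩
    intro a ha b hb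
    have haA : a ∈ A := (Finset.mem_sort _).mp ha
    have hbB : b ∈ B := (Finset.mem_sort _).mp (List.mem_of_mem_tail hb)
    calc a ≤ A.max' hA := Finset.le_max' A a haA
    _ = m := h
    _ ≤ b := Finset.min'_le B b hbB

lemma nuPow_union (p : ℝ) (x : ℕ → ℝ) {A B : Finset ℕ} (hA : A.Nonempty) (hB : B.Nonempty)
    (h : A.max' hA = B.min' hB) :
    nuPow p x (A ∪ B) = nuPow p x A + nuPow p x B := by
  show ps (fun a b => |x a - x b| ^ p) _ = ps _ _ + ps _ _
  rw [sort_union hA hB h]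
  exact ps_append _ _ _ (sort_ne_nil hA) (sort_ne_nil hB)
    (by rw [getLast_sort hA, head_sort hB, h])

lemma min'_congr {s t : Finset ℕ} (e : s = t) (hs : s.Nonempty) (ht : t.Nonempty) :
    s.min' hs = t.min' ht := by subst e; rfl

lemma min'_congr_aux {s t : Finset ℕ} (e : s = t) (hs : s.Nonempty) :
    s.min' hs = t.min' (e ▸ hs) := by subst e; rfl

lemma max'_congr_aux {s t : Finset ℕ} (e : s = t) (hs : s.Nonempty) :
    s.max' hs = t.max' (e ▸ hs) := by subst e; rfl

/-- chain fold lemma -/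
lemma chain_foldr (p : ℝ) (x : ℕ → ℝ) :
    ∀ (L : List (Finset ℕ)) (A : Finset ℕ) (hA : A.Nonempty), (∀ B ∈ L, B.Nonempty) →
    List.Chain' (fun S T : Finset ℕ =>
      ∀ (hS : S.Nonempty) (hT : T.Nonempty), S.max' hS = T.min' hT) (A :: L) →
    ∃ hU : ((A :: L).foldr (· ∪ ·) ∅).Nonempty,
      ((A :: L).foldr (· ∪ ·) ∅).min' hU = A.min' hA ∧
      nuPow p x ((A :: L).foldr (· ∪ ·) ∅) = ((A :: L).map (nuPow p x)).sum := by
  intro L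
  induction L with
  | nil =>
    intro A hA _ _
    have e : ([A].foldr (· ∪ ·) ∅) = A := by simp
    have hne : ([A].foldr (· ∪ ·) ∅).Nonempty := Finset.Nonempty.mono Finset.subset_union_left hA
    refine ⟨hne, min'_congr e hne hA, ?_⟩
    simp only [List.map, List.sum_cons, List.sum_nil, add_zero]
    rw [show ([A].foldr (· ∪ ·) ∅) = A ∪ ∅ from rfl, Finset.union_empty]
  | cons B r ih =>
    intro A hA hne hchain
    obtain ⟨hU', hmin', hsum'⟩ := ih B (hne B (by simp)) (fun S hS => hne S (by simp [hS]))
      (hchain.tail)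
    set U' := ((B :: r).foldr (· ∪ ·) ∅) with hU'def
    have hfold : ((A :: B :: r).foldr (· ∪ ·) ∅) = A ∪ U' := rfl
    have hAB : A.max' hA = B.min' (hne B (by simp)) := hchain.rel_head hA _
    have hkey : A.max' hA = U'.min' hU' := by rw [hAB, ← hmin']
    have hUne : (A ∪ U').Nonempty := Finset.Nonempty.mono Finset.subset_union_left hA
    refine ⟨hfold ▸ hUne, ?_, ?_⟩
    · rw [min'_congr hfold (hfold ▸ hUne) hUne, Finset.min'_union hA hU']
      have : A.min' hA ≤ U'.min' hU' := by
        rw [← hkey]; exact Finset.min'_le A _ (A.max'_mem hA)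
      exact min_eq_left this
    · show nuPow p x (A ∪ U') = _
      rw [nuPow_union p x hA hU' hkey, hsum']
      simp

lemma mem_foldr_union (a : ℕ) :
    ∀ L : List (Finset ℕ), a ∈ L.foldr (· ∪ ·) ∅ ↔ ∃ A ∈ L, a ∈ A := by
  intro L
  induction L with
  | nil => simp
  | cons B r ih => simp [ih]

end NuAux

/-- The gap-filling lemma: if `C_j` and `D_j` share minima `m_j` and maxima `m'_j`,
the blocks come in increasing order, and `E_j` connects `m'_j` to `m_{j+1}`
(with `E_ℓ = {m'_ℓ}`), then
`Σ_j (ν_p(v,D_j)^p - ν_p(v,C_j)^p) = ν_p(v, ∪(D_j ∪ E_j))^p - ν_p(v, ∪(C_j ∪ E_j))^p`. -/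
theorem nuPow_fill_gaps (p : ℝ) (hp : 1 < p) (ℓ : ℕ) (hℓ : 0 < ℓ)
    (C D E : Fin ℓ → Finset ℕ)
    (hC : ∀ j, (C j).Nonempty) (hD : ∀ j, (D j).Nonempty) (hE : ∀ j, (E j).Nonempty)
    (hmin : ∀ j (hCj : (C j).Nonempty) (hDj : (D j).Nonempty),
      (D j).min' hDj = (C j).min' hCj)
    (hmax : ∀ j (hCj : (C j).Nonempty) (hDj : (D j).Nonempty),
      (D j).max' hDj = (C j).max' hCj)
    (horder : ∀ j : Fin ℓ, ∀ h : (j : ℕ) + 1 < ℓ,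
      (C j).max' (hC j) ≤ (C ⟨j + 1, h⟩).min' (hC ⟨j + 1, h⟩))
    (hEmin : ∀ j : Fin ℓ, ∀ h : (j : ℕ) + 1 < ℓ,
      (E j).min' (hE j) = (C j).max' (hC j) ∧
      (E j).max' (hE j) = (C ⟨j + 1, h⟩).min' (hC ⟨j + 1, h⟩))
    (hElast : E ⟨ℓ - 1, by omega⟩ = {(C ⟨ℓ - 1, by omega⟩).max' (hC ⟨ℓ - 1, by omega⟩)})
    (v : ℕ → ℝ) :
    ∑ j, (nuPow p v (D j) - nuPow p v (C j)) =
      nuPow p v (Finset.univ.biUnion fun j => D j ∪ E j) -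
        nuPow p v (Finset.univ.biUnion fun j => C j ∪ E j) := by
  classical
  have hElast' : ∀ (hlt : ℓ - 1 < ℓ), E ⟨ℓ - 1, hlt⟩ = {(C ⟨ℓ - 1, hlt⟩).max' (hC _)} :=
    fun _ => hElast
  have hEj : ∀ j : Fin ℓ, ¬ ((j : ℕ) + 1 < ℓ) → E j = {(C j).max' (hC j)} := by
    intro j h
    have hlt := j.isLt
    have hj : j = ⟨ℓ - 1, Nat.sub_lt hℓ one_pos⟩ := by
      apply Fin.ext; show (j : ℕ) = ℓ - 1; omega
    rw [hj]; exact hElast' _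
  -- min' of E j equals max' of C j in all cases
  have hEmin' : ∀ j : Fin ℓ, (E j).min' (hE j) = (C j).max' (hC j) := by
    intro j
    by_cases h : (j : ℕ) + 1 < ℓ
    · exact (hEmin j h).1
    · rw [NuAux.min'_congr_aux (hEj j h) (hE j)]
      simp
  have hEmax' : ∀ j : Fin ℓ, (E j).max' (hE j) ≥ (C j).max' (hC j) := by
    intro j
    by_cases h : (j : ℕ) + 1 < ℓ
    · rw [(hEmin j h).2]; exact horder j h
    · rw [NuAux.max'_congr_aux (hEj j h) (hE j)]
      simp
  -- the merged blocks
  set F : Fin ℓ → Finset ℕ := fun j => D j ∪ E j with hF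
  set G : Fin ℓ → Finset ℕ := fun j => C j ∪ E j with hG
  have hFne : ∀ j, (F j).Nonempty := fun j => (hD j).mono Finset.subset_union_left
  have hGne : ∀ j, (G j).Nonempty := fun j => (hC j).mono Finset.subset_union_left
  -- nuPow of merged blocks
  have hFsplit : ∀ j, nuPow p v (F j) = nuPow p v (D j) + nuPow p v (E j) := by
    intro j
    exact NuAux.nuPow_union p v (hD j) (hE j) (by rw [hEmin' j, hmax j])
  have hGsplit : ∀ j, nuPow p v (G j) = nuPow p v (C j) + nuPow p v (E j) := by
    intro j
    exact NuAux.nuPow_union p v (hC j) (hE j) ((hEmin' j).symm)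
  -- min' and max' of merged blocks
  have hFmin : ∀ j, (F j).min' (hFne j) = (C j).min' (hC j) := by
    intro j
    show (D j ∪ E j).min' (Finset.Nonempty.mono Finset.subset_union_left (hD j)) = _
    rw [Finset.min'_union (hD j) (hE j), hmin j, hEmin' j]
    exact min_eq_left (Finset.min'_le _ _ ((C j).max'_mem (hC j)))
  have hGmin : ∀ j, (G j).min' (hGne j) = (C j).min' (hC j) := by
    intro j
    show (C j ∪ E j).min' (Finset.Nonempty.mono Finset.subset_union_left (hC j)) = _
    rw [Finset.min'_union (hC j) (hE j), hEmin' j]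
    exact min_eq_left (Finset.min'_le _ _ ((C j).max'_mem (hC j)))
  have hFmax : ∀ j, (F j).max' (hFne j) = (E j).max' (hE j) := by
    intro j
    show (D j ∪ E j).max' (Finset.Nonempty.mono Finset.subset_union_left (hD j)) = _
    rw [Finset.max'_union (hD j) (hE j), hmax j (hC j)]
    exact max_eq_right (hEmax' j)
  have hGmax : ∀ j, (G j).max' (hGne j) = (E j).max' (hE j) := by
    intro j
    show (C j ∪ E j).max' (Finset.Nonempty.mono Finset.subset_union_left (hC j)) = _
    rw [Finset.max'_union (hC j) (hE j)]
    exact max_eq_right (hEmax' j)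
  -- chain conditions
  have hchainF : ∀ (i : ℕ) (h : i + 1 < ℓ),
      ∀ (hS : (F ⟨i, by omega⟩).Nonempty) (hT : (F ⟨i+1, h⟩).Nonempty),
        (F ⟨i, by omega⟩).max' hS = (F ⟨i+1, h⟩).min' hT := by
    intro i h hS hT
    rw [hFmax ⟨i, by omega⟩, hFmin ⟨i+1, h⟩, (hEmin ⟨i, by omega⟩ h).2]
  have hchainG : ∀ (i : ℕ) (h : i + 1 < ℓ),
      ∀ (hS : (G ⟨i, by omega⟩).Nonempty) (hT : (G ⟨i+1, h⟩).Nonempty),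
        (G ⟨i, by omega⟩).max' hS = (G ⟨i+1, h⟩).min' hT := by
    intro i h hS hT
    rw [hGmax ⟨i, by omega⟩, hGmin ⟨i+1, h⟩, (hEmin ⟨i, by omega⟩ h).2]
  -- the union as a foldr over a list
  have hbiUnion : ∀ (f : Fin ℓ → Finset ℕ),
      Finset.univ.biUnion f = (((List.finRange ℓ).map f).foldr (· ∪ ·) ∅) := by
    intro f
    ext a
    rw [Finset.mem_biUnion, NuAux.mem_foldr_union]
    simp
  -- main computation for a chained family
  have hmain : ∀ (f : Fin ℓ → Finset ℕ), (∀ j, (f j).Nonempty) →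
      (∀ (i : ℕ) (h : i + 1 < ℓ),
        ∀ (hS : (f ⟨i, by omega⟩).Nonempty) (hT : (f ⟨i+1, h⟩).Nonempty),
          (f ⟨i, by omega⟩).max' hS = (f ⟨i+1, h⟩).min' hT) →
      nuPow p v (Finset.univ.biUnion f) = ∑ j, nuPow p v (f j) := by
    intro f hfne hfchain
    rw [hbiUnion f]
    have hLne : (List.finRange ℓ).map f ≠ [] := by
      simp [List.finRange, hℓ]
      omega
    obtain ⟨A, L, hAL⟩ : ∃ A L, (List.finRange ℓ).map f = A :: L := by
      cases h : (List.finRange ℓ).map f with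
      | nil => exact absurd h hLne
      | cons A L => exact ⟨A, L, rfl⟩
    have hAne : A.Nonempty ∧ ∀ B ∈ L, B.Nonempty := by
      constructor
      · have : A ∈ (List.finRange ℓ).map f := by rw [hAL]; simp
        obtain ⟨j, _, rfl⟩ := List.mem_map.mp this
        exact hfne j
      · intro B hB
        have : B ∈ (List.finRange ℓ).map f := by rw [hAL]; simp [hB]
        obtain ⟨j, _, rfl⟩ := List.mem_map.mp this
        exact hfne j
    have hchain : List.Chain' (fun S T : Finset ℕ =>
        ∀ (hS : S.Nonempty) (hT : T.Nonempty), S.max' hS = T.min' hT)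
        ((List.finRange ℓ).map f) := by
      show List.IsChain _ _
      rw [List.isChain_map]
      rw [List.isChain_iff_getElem]
      intro i hi
      simp only [List.length_finRange] at hi
      rw [List.getElem_finRange, List.getElem_finRange]
      intro hS hT
      exact hfchain i (by omega) hS hT
    rw [hAL] at hchain
    obtain ⟨hU, _, hsum⟩ := NuAux.chain_foldr p v L A hAne.1 hAne.2 hchain
    rw [hAL, hsum, ← hAL, List.map_map, Fin.sum_univ_def]
    rfl
  rw [hmain F hFne hchainF, hmain G hGne hchainG]
  simp only [hFsplit, hGsplit]
  rw [Finset.sum_add_distrib, Finset.sum_add_distrib, Finset.sum_sub_distrib]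
  ring
end

section
/- Let p ∈ (1,∞) and let x : ℕ → ℝ, supported on [0, 2m-1], with |x(j) - x(j+1)|^p ≤ γ/(2m) for all 0 ≤ j < 2m, where γ > 0. Let n be a positive even integer, let T_n be the stretch-by-n operator (linear interpolation), let z = γ^{1/p} z_{2mn}, and let w = T_n x + z. Then max_{0 ≤ j < 2mn} |w(j) - w(j+1)|^p ≤ (γ/(2mn)) (1 + n^{-(1 - 1/p)})^p. -/
/-- The spiky vector `z_{2k}`. -/
noncomputable def spiky (p : ℝ) (k : ℕ) : ℕ → ℝ :=
  fun n => if Odd n ∧ n < 2 * k then ((2 * k : ℕ) : ℝ) ^ (-(1 / p)) else 0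

lemma stretch_diff (n : ℕ) (hn : 0 < n) (x : ℕ → ℝ) (j : ℕ) :
    stretch n x j - stretch n x (j + 1) = (x (j / n) - x (j / n + 1)) / n := by
  set k := j / n with hk
  set r := j % n with hr
  have hrn : r < n := Nat.mod_lt _ hn
  have hj : j = n * k + r := by rw [hk, hr]; exact (Nat.div_add_mod j n).symm
  have hn' : (n : ℝ) ≠ 0 := Nat.cast_ne_zero.2 hn.ne'
  rcases lt_or_eq_of_le (Nat.succ_le_of_lt hrn) with h | h
  · -- r + 1 < n
    have h1 : j + 1 = n * k + (r + 1) := by omega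
    have hd : (j + 1) / n = k := by
      rw [h1, Nat.mul_add_div hn, Nat.div_eq_of_lt h]; omega
    have hmo : (j + 1) % n = r + 1 := by
      rw [h1, Nat.mul_add_mod, Nat.mod_eq_of_lt h]
    simp only [stretch, hd, hmo, ← hk, ← hr]
    push_cast
    field_simp
    ring
  · -- r + 1 = n
    have h1 : j + 1 = n * (k + 1) := by
      have : n * (k + 1) = n * k + n := by ring
      omega
    have hd : (j + 1) / n = k + 1 := by rw [h1, Nat.mul_div_cancel_left _ hn]
    have hmo : (j + 1) % n = 0 := by rw [h1, Nat.mul_mod_right]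
    have hrc : (r : ℝ) = (n : ℝ) - 1 := by
      have : (r : ℕ) = n - 1 := by omega
      rw [this]; push_cast [Nat.cast_sub hn]; ring
    simp only [stretch, hd, hmo, ← hk, ← hr, hrc]
    push_cast
    field_simp
    ring

lemma spiky_diff (p : ℝ) (M : ℕ) (j : ℕ) (hj : j < 2 * M) :
    |spiky p M j - spiky p M (j + 1)| = ((2 * M : ℕ) : ℝ) ^ (-(1 / p)) := by
  have hpos : (0 : ℝ) ≤ ((2 * M : ℕ) : ℝ) ^ (-(1 / p)) :=
    Real.rpow_nonneg (by positivity) _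
  rcases Nat.even_or_odd j with he | ho
  · have h1 : ¬(Odd j ∧ j < 2 * M) := by
      rintro ⟨h, -⟩; exact (Nat.not_odd_iff_even.2 he) h
    have hjo : Odd (j + 1) := Even.add_one he
    have hev : Even (2 * M) := ⟨M, by omega⟩
    have hjl : j + 1 < 2 * M := by
      rcases Nat.lt_or_ge (j + 1) (2 * M) with h | h
      · exact h
      · exfalso
        have heq : j + 1 = 2 * M := by omega
        exact (Nat.not_odd_iff_even.2 hev) (heq ▸ hjo)
    simp only [spiky]
    rw [if_neg h1, if_pos (show Odd (j + 1) ∧ j + 1 < 2 * M from ⟨hjo, hjl⟩),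
      zero_sub, abs_neg, abs_of_nonneg hpos]
  · have h2 : ¬(Odd (j + 1) ∧ j + 1 < 2 * M) := by
      rintro ⟨h, -⟩
      exact (Nat.not_odd_iff_even.2 (Odd.add_one ho)) h
    simp only [spiky]
    rw [if_pos (show Odd j ∧ j < 2 * M from ⟨ho, hj⟩), if_neg h2,
      sub_zero, abs_of_nonneg hpos]

/-- Bound on the consecutive differences of `w = T_n x + γ^{1/p} z_{2mn}`. -/
theorem stretched_spiky_diff_bound (p : ℝ) (hp : 1 < p) (m : ℕ) (hm : 0 < m)
    (γ : ℝ) (hγ : 0 < γ) (x : ℕ → ℝ)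
    (hsupp : ∀ j, 2 * m ≤ j → x j = 0)
    (hdiff : ∀ j, j < 2 * m → |x j - x (j + 1)| ^ p ≤ γ / (2 * m))
    (n : ℕ) (hn : 0 < n) (hneven : Even n) :
    ∀ j, j < 2 * m * n →
      |(stretch n x j + γ ^ (1 / p) * spiky p (m * n) j) -
        (stretch n x (j + 1) + γ ^ (1 / p) * spiky p (m * n) (j + 1))| ^ p ≤
      γ / (2 * m * n) * (1 + (n : ℝ) ^ (-(1 - 1 / p))) ^ p := by
  intro j hj
  have hp0 : (0 : ℝ) < p := lt_trans one_pos hp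
  have hp0' : p ≠ 0 := hp0.ne'
  have hmn : (0:ℝ) < 2 * m := by positivity
  have hnr : (0:ℝ) < (n:ℝ) := Nat.cast_pos.2 hn
  have hNpos : (0:ℝ) < ((2 * (m * n) : ℕ) : ℝ) := by positivity
  set k := j / n with hk
  have hkm : k < 2 * m := by
    apply Nat.div_lt_of_lt_mul
    rw [Nat.mul_comm]; exact hj
  -- bound on x increment
  have hxb : |x k - x (k + 1)| ≤ (γ / (2 * m)) ^ (1 / p) := by
    have h := hdiff k hkm
    have hc : ((γ / (2 * m)) ^ (1 / p)) ^ p = γ / (2 * m) := by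
      rw [← Real.rpow_mul (by positivity), one_div, inv_mul_cancel₀ hp0', Real.rpow_one]
    rw [← hc] at h
    exact (Real.rpow_le_rpow_iff (abs_nonneg _) (by positivity) hp0).1 h
  -- the total increment bound
  set N : ℝ := ((2 * (m * n) : ℕ) : ℝ) with hN
  set s : ℝ := (n : ℝ) ^ (-(1 - 1 / p)) with hs
  have hs0 : 0 ≤ s := Real.rpow_nonneg hnr.le _
  have hB : |(stretch n x j + γ ^ (1 / p) * spiky p (m * n) j) -
      (stretch n x (j + 1) + γ ^ (1 / p) * spiky p (m * n) (j + 1))| ≤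
      γ ^ (1 / p) * N ^ (-(1 / p)) * (1 + s) := by
    have e1 : (stretch n x j + γ ^ (1 / p) * spiky p (m * n) j) -
        (stretch n x (j + 1) + γ ^ (1 / p) * spiky p (m * n) (j + 1)) =
        (stretch n x j - stretch n x (j + 1)) +
        γ ^ (1 / p) * (spiky p (m * n) j - spiky p (m * n) (j + 1)) := by ring
    rw [e1]
    have h2 := spiky_diff p (m * n) j (by rw [← Nat.mul_assoc]; exact hj)
    calc |(stretch n x j - stretch n x (j + 1)) +
        γ ^ (1 / p) * (spiky p (m * n) j - spiky p (m * n) (j + 1))|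
        ≤ |stretch n x j - stretch n x (j + 1)| +
          |γ ^ (1 / p) * (spiky p (m * n) j - spiky p (m * n) (j + 1))| := abs_add_le _ _
      _ = |x k - x (k + 1)| / n + γ ^ (1 / p) * N ^ (-(1 / p)) := by
          rw [stretch_diff n hn x j, abs_mul, abs_div, h2, abs_of_nonneg hnr.le,
            abs_of_nonneg (Real.rpow_nonneg hγ.le _), ← hk, ← hN]
      _ ≤ (γ / (2 * m)) ^ (1 / p) / n + γ ^ (1 / p) * N ^ (-(1 / p)) := by
          gcongr
      _ = γ ^ (1 / p) * N ^ (-(1 / p)) * (1 + s) := by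
          have hNe : N = (2 * m : ℝ) * n := by rw [hN]; push_cast; ring
          have hBpos : (0:ℝ) < (2 * (m:ℝ)) ^ (1 / p) := Real.rpow_pos_of_pos hmn _
          have hCpos : (0:ℝ) < (n:ℝ) ^ (1 / p) := Real.rpow_pos_of_pos hnr _
          have hsval : s = (n:ℝ) ^ (1 / p) / (n:ℝ) := by
            rw [hs, neg_sub, Real.rpow_sub hnr, Real.rpow_one]
          have hNval : N ^ (-(1 / p)) =
              ((2 * (m:ℝ)) ^ (1 / p) * (n:ℝ) ^ (1 / p))⁻¹ := by
            rw [hNe, Real.rpow_neg (by positivity), Real.mul_rpow hmn.le hnr.le]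
          rw [Real.div_rpow hγ.le hmn.le, hNval, hsval]
          field_simp
          ring
  have habs : (0:ℝ) ≤ |(stretch n x j + γ ^ (1 / p) * spiky p (m * n) j) -
      (stretch n x (j + 1) + γ ^ (1 / p) * spiky p (m * n) (j + 1))| := abs_nonneg _
  calc |(stretch n x j + γ ^ (1 / p) * spiky p (m * n) j) -
        (stretch n x (j + 1) + γ ^ (1 / p) * spiky p (m * n) (j + 1))| ^ p
      ≤ (γ ^ (1 / p) * N ^ (-(1 / p)) * (1 + s)) ^ p :=
        Real.rpow_le_rpow habs hB hp0.le
    _ = γ / (2 * m * n) * (1 + s) ^ p := by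
        rw [Real.mul_rpow (by positivity) (by positivity),
          Real.mul_rpow (Real.rpow_nonneg hγ.le _) (Real.rpow_nonneg hNpos.le _),
          ← Real.rpow_mul hγ.le, ← Real.rpow_mul hNpos.le,
          one_div, inv_mul_cancel₀ hp0', Real.rpow_one,
          neg_mul, inv_mul_cancel₀ hp0', Real.rpow_neg_one]
        have hNe : N = (2 * m : ℝ) * n := by rw [hN]; push_cast; ring
        rw [hNe]
        field_simp
end
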